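/- For every real z > 4, (1/(√2 π)) ∫_{-π}^{π} dq/((1 - cos q)² - z) = - (√(√(z-4) + √z)) / (z^{3/4} √(z-4)). -/

import Mathlib

open Real

theorem poisson (c : ℝ) (hc : 1 < |c|) :
    ∫ q in (-π)..π, 1 / (-((c^2+1)/(2*c)) - Real.cos q) = -(4*c)*π/(c^2-1) := by
  have hc' : c < -1 ∨ 1 < c := by
    rcases lt_abs.mp hc with h | h
    exacts [Or.inr h, Or.inl (by linarith)]
  have hc0 : c ≠ 0 := by rcases hc' with h|h <;> intro e <;> rw [e] at h <;> norm_num at h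
  have hc1 : (0:ℝ) < c^2 - 1 := by rcases hc' with h|h <;> nlinarith
  have hcc : ∀ q : ℝ, c + Real.cos q ≠ 0 := by
    intro q
    have h1 := Real.neg_one_le_cos q
    have h2 := Real.cos_le_one q
    rcases hc' with h|h
    · exact ne_of_lt (by linarith)
    · exact ne_of_gt (by linarith)
  have hden : ∀ q : ℝ, 0 < c^2 + 2*c*Real.cos q + 1 := by
    intro q
    have h1 := Real.neg_one_le_cos q
    have h2 := Real.cos_le_one q
    rcases hc' with h|h <;> nlinarith
  have hbne : ∀ q : ℝ, -((c^2+1)/(2*c)) - Real.cos q ≠ 0 := by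
    intro q h
    apply (hden q).ne'
    field_simp at h
    linear_combination -h
  have hcont : Continuous fun q : ℝ => 1 / (-((c^2+1)/(2*c)) - Real.cos q) :=
    continuous_const.div (by continuity) hbne
  have hF : ∀ q ∈ Set.uIcc (-π) π,
      HasDerivAt (fun x => (-2*c/(c^2-1)) * (x - 2*Real.arctan (Real.sin x / (c + Real.cos x))))
        (1 / (-((c^2+1)/(2*c)) - Real.cos q)) q := by
    intro q _
    have hu : HasDerivAt (fun x => Real.sin x / (c + Real.cos x))
        ((Real.cos q * (c + Real.cos q) - Real.sin q * (0 + -Real.sin q)) / (c + Real.cos q)^2) q :=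
      (Real.hasDerivAt_sin q).div ((hasDerivAt_const q c).add (Real.hasDerivAt_cos q)) (hcc q)
    have harc := (Real.hasDerivAt_arctan (Real.sin q / (c + Real.cos q))).comp q hu
    have hFd := ((hasDerivAt_id q).sub (harc.const_mul 2)).const_mul (-2*c/(c^2-1))
    convert hFd using 1
    · rfl
    · rfl
    · rfl
    have e1 : Real.cos q * (c + Real.cos q) - Real.sin q * (0 + -Real.sin q) = c * Real.cos q + 1 := by
      linear_combination Real.sin_sq_add_cos_sq q
    have e2 : 1 + (Real.sin q / (c + Real.cos q))^2 = (c^2 + 2*c*Real.cos q + 1)/(c + Real.cos q)^2 := by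
      rw [eq_div_iff (pow_ne_zero 2 (hcc q))]
      field_simp [hcc q]
      linear_combination Real.sin_sq_add_cos_sq q
    rw [e1, e2, one_div_div]
    have e3 : (c + Real.cos q)^2 / (c^2 + 2*c*Real.cos q + 1) * ((c*Real.cos q + 1)/(c + Real.cos q)^2)
        = (c*Real.cos q + 1) / (c^2 + 2*c*Real.cos q + 1) := by
      field_simp [hcc q, (hden q).ne']
    rw [e3]
    rw [div_eq_iff (hbne q)]
    have hD := (hden q).ne'
    have h2c : (2:ℝ)*c ≠ 0 := by positivity
    rw [← mul_div_assoc, one_sub_div hD]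
    have key : -((c^2+1)/(2*c)) - Real.cos q = -(c^2 + 2*c*Real.cos q + 1)/(2*c) := by
      field_simp; ring
    have key2 : c^2 + 2*c*Real.cos q + 1 - 2*(c*Real.cos q + 1) = c^2 - 1 := by ring
    rw [key, key2]
    field_simp
    have hD' : c * (c + 2 * Real.cos q) + 1 ≠ 0 := by
      rw [show c * (c + 2 * Real.cos q) + 1 = c^2 + 2*c*Real.cos q + 1 by ring]; exact hD
    exact (div_self hD').symm
  have := intervalIntegral.integral_eq_sub_of_hasDerivAt hF
    (hcont.intervalIntegrable _ _)
  rw [this]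
  simp [Real.sin_pi, Real.sin_neg, Real.arctan_zero]
  field_simp
  ring

theorem cor_neg (b : ℝ) (hb : b < -1) :
    ∫ q in (-π)..π, 1 / (b - Real.cos q) = -(2*π) / Real.sqrt (b^2 - 1) := by
  have hb1 : (0:ℝ) < b^2 - 1 := by nlinarith
  set r := Real.sqrt (b^2 - 1) with hr_def
  have hr : 0 < r := Real.sqrt_pos.mpr hb1
  have hr2 : r^2 = b^2 - 1 := Real.sq_sqrt hb1.le
  set c := -b + r with hc_def
  have hcgt : 1 < c := by nlinarith
  have hc : 1 < |c| := lt_of_lt_of_le hcgt (le_abs_self c)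
  have hc0 : (0:ℝ) < c := by linarith
  have hb' : -((c^2+1)/(2*c)) = b := by
    rw [neg_div', div_eq_iff (by positivity : (2:ℝ)*c ≠ 0), hc_def]
    linear_combination -hr2
  have hc21 : c^2 - 1 = 2*r*c := by
    rw [hc_def]; linear_combination -hr2
  rw [← hb', poisson c hc, hc21]
  rw [div_eq_div_iff (by positivity) hr.ne']
  ring

theorem cor_pos (b : ℝ) (hb : 1 < b) :
    ∫ q in (-π)..π, 1 / (b - Real.cos q) = (2*π) / Real.sqrt (b^2 - 1) := by
  have hb1 : (0:ℝ) < b^2 - 1 := by nlinarith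
  set r := Real.sqrt (b^2 - 1) with hr_def
  have hr : 0 < r := Real.sqrt_pos.mpr hb1
  have hr2 : r^2 = b^2 - 1 := Real.sq_sqrt hb1.le
  set c := -b - r with hc_def
  have hclt : c < -1 := by nlinarith
  have hc : 1 < |c| := by rw [abs_of_neg (by linarith)]; linarith
  have hc0 : c < 0 := by linarith
  have hb' : -((c^2+1)/(2*c)) = b := by
    rw [neg_div', div_eq_iff (by intro h; rcases mul_eq_zero.mp h with h|h <;> [norm_num at h; exact hc0.ne h]), hc_def]
    linear_combination -hr2
  have hc21 : c^2 - 1 = -(2*r*c) := by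
    rw [hc_def]; linear_combination -hr2
  rw [← hb', poisson c hc, hc21]
  rw [div_eq_div_iff (by intro h; apply hr.ne'; nlinarith) hr.ne']
  ring


noncomputable def 𝔢 (q : ℝ) : ℝ := (1 - Real.cos q) ^ 2

theorem integral_closed_form_pos (z : ℝ) (hz : 4 < z) :
    (1 / (Real.sqrt 2 * π)) * ∫ q in (-π)..π, 1 / (𝔢 q - z) =
      -(Real.sqrt (Real.sqrt (z - 4) + Real.sqrt z) /
        (z ^ ((3 : ℝ) / 4) * Real.sqrt (z - 4))) := by
  have hz0 : (0:ℝ) < z := by linarith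
  set s := Real.sqrt z with hs_def
  have hs2 : 2 < s := by
    rw [hs_def, show (2:ℝ) = Real.sqrt 4 by
      rw [show (4:ℝ) = 2^2 by norm_num, Real.sqrt_sq (by norm_num)]]
    exact Real.sqrt_lt_sqrt (by norm_num) hz
  have hsz : s^2 = z := Real.sq_sqrt hz0.le
  have hd1 : ∀ q : ℝ, (1 - s) - Real.cos q ≠ 0 := fun q =>
    ne_of_lt (by have := Real.neg_one_le_cos q; linarith)
  have hd2 : ∀ q : ℝ, (1 + s) - Real.cos q ≠ 0 := fun q =>
    ne_of_gt (by have := Real.cos_le_one q; linarith)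
  have hint1 : IntervalIntegrable (fun q => 1/((1-s) - Real.cos q)) MeasureTheory.volume (-π) π :=
    (continuous_const.div (by continuity) hd1).intervalIntegrable _ _
  have hint2 : IntervalIntegrable (fun q => 1/((1+s) - Real.cos q)) MeasureTheory.volume (-π) π :=
    (continuous_const.div (by continuity) hd2).intervalIntegrable _ _
  have hI : ∫ q in (-π)..π, 1 / (𝔢 q - z)
      = ∫ q in (-π)..π, (1/(2*s)) * (1/((1-s) - Real.cos q) - 1/((1+s) - Real.cos q)) := by
    apply intervalIntegral.integral_congr
    intro q _
    have he : 𝔢 q - z = ((1-s) - Real.cos q) * ((1+s) - Real.cos q) := by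
      simp only [𝔢]; linear_combination hsz
    show 1 / (𝔢 q - z) = 1/(2*s) * (1/((1-s) - Real.cos q) - 1/((1+s) - Real.cos q))
    rw [he]
    field_simp [hd1 q, hd2 q]
    ring
  rw [hI, intervalIntegral.integral_const_mul, intervalIntegral.integral_sub hint1 hint2,
    cor_neg (1-s) (by linarith), cor_pos (1+s) (by linarith)]
  have h1 : (1-s)^2 - 1 = s*(s-2) := by ring
  have h2 : (1+s)^2 - 1 = s*(s+2) := by ring
  have hz4 : z - 4 = (s-2)*(s+2) := by linear_combination -hsz
  rw [h1, h2, hz4, Real.sqrt_mul (by linarith : (0:ℝ) ≤ s) (s-2),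
    Real.sqrt_mul (by linarith : (0:ℝ) ≤ s) (s+2),
    Real.sqrt_mul (by linarith : (0:ℝ) ≤ s-2) (s+2)]
  set a := Real.sqrt (s-2) with ha_def
  set b := Real.sqrt (s+2) with hb_def
  set u := Real.sqrt s with hu_def
  set v := Real.sqrt 2 with hv_def
  have ha0 : 0 < a := Real.sqrt_pos.mpr (by linarith)
  have hb0 : 0 < b := Real.sqrt_pos.mpr (by linarith)
  have hu0 : 0 < u := Real.sqrt_pos.mpr (by linarith)
  have hv0 : 0 < v := Real.sqrt_pos.mpr (by norm_num)
  have ha2 : a^2 = s - 2 := Real.sq_sqrt (by linarith)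
  have hb2 : b^2 = s + 2 := Real.sq_sqrt (by linarith)
  have hu2 : u^2 = s := Real.sq_sqrt (by linarith)
  have hv2 : v^2 = 2 := Real.sq_sqrt (by norm_num)
  have hzu : z = u^4 := by rw [← hsz, ← hu2]; ring
  have h34 : z ^ ((3:ℝ)/4) = u^3 := by
    rw [hzu, ← Real.rpow_natCast u 4, ← Real.rpow_mul hu0.le]
    norm_num
  have hsq : ((a+b)/v)^2 = a*b + s := by
    rw [div_pow, hv2]
    linear_combination (ha2 + hb2)/2
  have key : Real.sqrt (a*b + s) = (a+b)/v := by
    rw [← hsq, Real.sqrt_sq (by positivity)]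
  rw [key, h34, ← hu2]
  have hpi : π ≠ 0 := Real.pi_ne_zero
  field_simp
  ring
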